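/- For any locally integrable function s : [1, ∞) → ℂ, any real λ with 0 < λ < 1 and any t > 1, the logarithmic mean τ satisfies s(t) − τ(t) = (λ/(1−λ))(τ(t) − τ(t^λ)) + (1/((1−λ) log t)) ∫_{t^λ}^{t} (s(t) − s(u))/u du. -/

import Mathlib

open Filter MeasureTheory Set

theorem lemma1_part_ii
    (s : ℝ → ℂ) (hs : ∀ t : ℝ, IntegrableOn s (Icc 1 t))
    (τ : ℝ → ℂ)
    (hτ : ∀ t : ℝ, τ t = ((Real.log t : ℂ))⁻¹ * ∫ u in Ioc (1:ℝ) t, s u / (u : ℂ))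
    (l t : ℝ) (hl0 : 0 < l) (hl1 : l < 1) (ht : 1 < t) :
    s t - τ t = ((l / (1 - l) : ℝ) : ℂ) * (τ t - τ (t ^ l))
      + (((1 - l) * Real.log t : ℝ) : ℂ)⁻¹ *
        ∫ u in Ioc (t ^ l) t, (s t - s u) / (u : ℂ) := by
  set a := t ^ l with ha
  have ht0 : (0:ℝ) < t := by linarith
  have ha1 : 1 < a := Real.one_lt_rpow_iff_of_pos ht0 |>.2 (Or.inl ⟨ht, hl0⟩)
  have ha0 : (0:ℝ) < a := by linarith
  have hat : a < t := by
    rw [ha]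
    nth_rewrite 2 [← Real.rpow_one t]
    exact Real.rpow_lt_rpow_of_exponent_lt ht hl1
  have hL : 0 < Real.log t := Real.log_pos ht
  have hloga : Real.log a = l * Real.log t := Real.log_rpow ht0 l
  -- integrability
  have hI : IntegrableOn (fun u => s u / (u:ℂ)) (Icc 1 t) := by
    have hc : ContinuousOn (fun u : ℝ => ((u:ℂ))⁻¹) (Icc 1 t) := by
      apply ContinuousOn.inv₀
      · exact Continuous.continuousOn (by continuity)
      · intro x hx
        have : (0:ℝ) < x := lt_of_lt_of_le one_pos hx.1
        exact_mod_cast this.ne'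
    simpa [div_eq_mul_inv] using (hs t).mul_continuousOn hc isCompact_Icc
  have hI1 : IntegrableOn (fun u => s u / (u:ℂ)) (Ioc 1 a) :=
    hI.mono_set (fun x hx => ⟨hx.1.le, hx.2.trans hat.le⟩)
  have hI2 : IntegrableOn (fun u => s u / (u:ℂ)) (Ioc a t) :=
    hI.mono_set (fun x hx => ⟨(ha1.trans hx.1).le, hx.2⟩)
  have hI3 : IntegrableOn (fun u => s u / (u:ℂ)) (Ioc 1 t) :=
    hI.mono_set (fun x hx => ⟨hx.1.le, hx.2⟩)
  have hIc : IntegrableOn (fun u : ℝ => s t / (u:ℂ)) (Ioc a t) := by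
    have hc : ContinuousOn (fun u : ℝ => s t / (u:ℂ)) (Icc a t) := by
      apply ContinuousOn.div continuousOn_const (Continuous.continuousOn (by continuity))
      intro x hx
      have : (0:ℝ) < x := lt_of_lt_of_le ha0 hx.1
      exact_mod_cast this.ne'
    exact (hc.integrableOn_compact isCompact_Icc).mono_set Ioc_subset_Icc_self
  -- split integral
  have hsplit : (∫ u in Ioc (1:ℝ) t, s u / (u:ℂ)) =
      (∫ u in Ioc (1:ℝ) a, s u / (u:ℂ)) + ∫ u in Ioc a t, s u / (u:ℂ) := by
    rw [← MeasureTheory.setIntegral_union (Ioc_disjoint_Ioc_of_le le_rfl) measurableSet_Ioc hI1 hI2, Ioc_union_Ioc_eq_Ioc ha1.le hat.le]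
  -- constant integral
  have hinv : (∫ u in Ioc a t, ((u:ℂ))⁻¹) = (((1 - l) * Real.log t : ℝ) : ℂ) := by
    have h1 : (∫ u in Ioc a t, ((u:ℂ))⁻¹) = ((∫ u in Ioc a t, u⁻¹ : ℝ) : ℂ) := by
      rw [show (fun u : ℝ => ((u:ℂ))⁻¹) = fun u : ℝ => (((u⁻¹ : ℝ) : ℝ) : ℂ) by
        funext u; push_cast; ring]
      exact integral_ofReal
    have h2 : (∫ u in Ioc a t, u⁻¹ : ℝ) = (1 - l) * Real.log t := by
      rw [← intervalIntegral.integral_of_le hat.le, integral_inv_of_pos ha0 ht0,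
        Real.log_div ht0.ne' ha0.ne', hloga]
      ring
    rw [h1, h2]
  -- the subtraction integral
  have hsub : (∫ u in Ioc a t, (s t - s u) / (u:ℂ)) =
      s t * (((1 - l) * Real.log t : ℝ) : ℂ) - ∫ u in Ioc a t, s u / (u:ℂ) := by
    have : (∫ u in Ioc a t, (s t - s u) / (u:ℂ)) =
        (∫ u in Ioc a t, s t / (u:ℂ)) - ∫ u in Ioc a t, s u / (u:ℂ) := by
      rw [← integral_sub hIc hI2]
      apply setIntegral_congr_fun measurableSet_Ioc
      intro x hx; ring
    rw [this]
    congr 1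
    simp only [div_eq_mul_inv]
    rw [integral_const_mul, hinv]
  -- algebra
  rw [hτ t, hτ a, hsplit, hsub, hloga]
  set A := ∫ u in Ioc (1:ℝ) a, s u / (u:ℂ)
  set J := ∫ u in Ioc a t, s u / (u:ℂ)
  have hLne : (Real.log t : ℂ) ≠ 0 := by exact_mod_cast hL.ne'
  have hlne : (l : ℂ) ≠ 0 := by exact_mod_cast hl0.ne'
  have h1lne : ((1 - l : ℝ) : ℂ) ≠ 0 := by
    have : (1 - l : ℝ) ≠ 0 := by linarith
    exact_mod_cast this
  have h1lne' : (1 : ℂ) - (l:ℂ) ≠ 0 := by push_cast at h1lne; exact h1lne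
  push_cast
  rw [mul_inv, mul_inv, div_eq_mul_inv]
  linear_combination (-(s t)*(1-(l:ℂ))⁻¹*(1-(l:ℂ))) * (mul_inv_cancel₀ hLne)
    + ((1-(l:ℂ))⁻¹*((Real.log t : ℂ))⁻¹*A) * (mul_inv_cancel₀ hlne)
    + (((Real.log t : ℂ))⁻¹*A + ((Real.log t : ℂ))⁻¹*J - s t) * (mul_inv_cancel₀ h1lne')
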